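/- Let μ ∈ ℂ, s > 0 with s < |μ|, n ∈ ℕ, and let (y_k)_{0 ≤ k ≤ n} and (E_k)_{0 ≤ k ≤ n−1} be complex numbers with y_{k+1} = (μ + E_k)·y_k and |E_k| ≤ s for all 0 ≤ k ≤ n−1. Then for every 0 ≤ k ≤ n one has |y_k| ≤ |μ|^{−(n−k)} · |y_n| · exp( (1/(|μ| − s)) · Σ_{i=k}^{n−1} |E_i| ). -/

import Mathlib

/-- refined multiplicative backward estimate
`|y_k| ≤ |μ|^{-(n-k)} |y_n| exp((1/(|μ|−s)) Σ_{i=k}^{n-1} |E_i|)` for the recursion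
`y_{k+1} = (μ + E_k) y_k` with `|E_k| ≤ s < |μ|`. -/
theorem stmt_8 (mu : ℂ) (s : ℝ) (hs : 0 < s) (hsmu : s < ‖mu‖) (n : ℕ) (y E : ℕ → ℂ)
    (hrec : ∀ k, k < n → y (k + 1) = (mu + E k) * y k)
    (hE : ∀ k, k < n → ‖E k‖ ≤ s) :
    ∀ k, k ≤ n →
      ‖y k‖ ≤ (‖mu‖ ^ (n - k))⁻¹ * ‖y n‖ *
        Real.exp ((1 / (‖mu‖ - s)) * ∑ i ∈ Finset.Ico k n, ‖E i‖) := by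
  set M := ‖mu‖ with hMdef
  have hM : 0 < M := lt_trans hs hsmu
  have hMs : 0 < M - s := by linarith
  suffices H : ∀ d k, k + d = n → ‖y k‖ ≤ (M ^ d)⁻¹ * ‖y n‖ *
      Real.exp ((1 / (M - s)) * ∑ i ∈ Finset.Ico k n, ‖E i‖) by
    intro k hk
    have := H (n - k) k (by omega)
    exact this
  intro d
  induction d with
  | zero =>
    intro k hk
    have hk' : k = n := by omega
    subst hk'
    simp
  | succ d ih =>
    intro k hk
    have hkn : k < n := by omega
    have ih' := ih (k + 1) (by omega)
    have hEk := hE k hkn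
    have hEk0 : 0 ≤ ‖E k‖ := norm_nonneg _
    have hpos : 0 < M - ‖E k‖ := by linarith
    have h1 : (M - ‖E k‖) * ‖y k‖ ≤ ‖y (k + 1)‖ := by
      rw [hrec k hkn, norm_mul]
      have hn : M ≤ ‖mu + E k‖ + ‖E k‖ := by
        calc M = ‖(mu + E k) - E k‖ := by rw [add_sub_cancel_right]
          _ ≤ ‖mu + E k‖ + ‖E k‖ := norm_sub_le _ _
      nlinarith [norm_nonneg (y k)]
    have h2 : ‖y k‖ ≤ ‖y (k + 1)‖ * (M - ‖E k‖)⁻¹ := by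
      rw [← div_eq_mul_inv, le_div_iff₀ hpos]
      nlinarith
    have key : (M - ‖E k‖)⁻¹ ≤ Real.exp ((1 / (M - s)) * ‖E k‖) / M := by
      set t := (1 / (M - s)) * ‖E k‖ with ht
      have ht0 : 0 ≤ t := by positivity
      have htMs : t * (M - s) = ‖E k‖ := by
        rw [ht, one_div, mul_assoc, mul_comm ‖E k‖, ← mul_assoc, inv_mul_cancel₀ hMs.ne', one_mul]
      have h3 : M ≤ (1 + t) * (M - ‖E k‖) := by nlinarith
      have h5 : 1 + t ≤ Real.exp t := by linarith [Real.add_one_le_exp t]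
      rw [le_div_iff₀ hM]
      have heq : (M - ‖E k‖)⁻¹ * M = M / (M - ‖E k‖) := by ring
      rw [heq, div_le_iff₀ hpos]
      nlinarith
    calc ‖y k‖ ≤ ‖y (k + 1)‖ * (M - ‖E k‖)⁻¹ := h2
      _ ≤ ((M ^ d)⁻¹ * ‖y n‖ *
            Real.exp ((1 / (M - s)) * ∑ i ∈ Finset.Ico (k + 1) n, ‖E i‖)) *
          (Real.exp ((1 / (M - s)) * ‖E k‖) / M) := by
        apply mul_le_mul ih' key (by positivity) (by positivity)
      _ = (M ^ (d + 1))⁻¹ * ‖y n‖ *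
          Real.exp ((1 / (M - s)) * ∑ i ∈ Finset.Ico k n, ‖E i‖) := by
        rw [Finset.sum_eq_sum_Ico_succ_bot hkn, mul_add, Real.exp_add, pow_succ, mul_inv]
        ring
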